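/- Assume f satisfies (f0)–(f4). Then the function t ↦ f(t)/t^{p_*−1} is strictly increasing on (0,+∞). (Intermediate step in the proof of Claim 5 of Lemma 2.3: f(t)/t^{p_*−1} = F̃(t)/t^{p_*} + 2F(t)/t^{p_*}, where the first summand is strictly increasing by (f4) and the second is nondecreasing by Claim 4.) -/

import Mathlib

open Filter Set MeasureTheory

lemma aux_deriv {f F : ℝ → ℝ} (hf0 : Continuous f)
    (hF : ∀ t : ℝ, F t = ∫ s in (0:ℝ)..t, f s) (x : ℝ) : HasDerivAt F (f x) x := by
  have h := (hf0.integral_hasStrictDerivAt 0 x).hasDerivAt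
  exact h.congr_of_eventuallyEq (Eventually.of_forall fun t => hF t)

lemma aux_Fsmall {P : ℝ} (hP : 2 < P) {f F : ℝ → ℝ} (hf0 : Continuous f)
    (hF : ∀ t : ℝ, F t = ∫ s in (0:ℝ)..t, f s)
    (hf1 : Tendsto (fun t : ℝ => f t / |t| ^ (P - 1)) (nhdsWithin 0 {0}ᶜ) (nhds 0)) :
    ∀ ε > (0:ℝ), ∃ δ > (0:ℝ), δ ≤ 1 ∧ ∀ t : ℝ, 0 < t → t < δ → |F t| ≤ ε * t ^ P := by
  intro ε hε
  rw [Metric.tendsto_nhdsWithin_nhds] at hf1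
  obtain ⟨δ, hδ, hd⟩ := hf1 ε hε
  refine ⟨min δ 1, lt_min hδ one_pos, min_le_right _ _, fun t ht htδ => ?_⟩
  have htδ' : t < δ := lt_of_lt_of_le htδ (min_le_left _ _)
  have hbound : ∀ x ∈ Set.uIoc (0:ℝ) t, ‖f x‖ ≤ ε * t ^ (P - 1) := by
    intro x hx
    rw [uIoc_of_le ht.le] at hx
    have hx0 : 0 < x := hx.1
    have hxd : dist x 0 < δ := by
      rw [Real.dist_eq, sub_zero, abs_of_pos hx0]; exact lt_of_le_of_lt hx.2 htδ'
    have := hd (by simpa using hx0.ne') hxd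
    have hxP : (0:ℝ) < x ^ (P - 1) := Real.rpow_pos_of_pos hx0 _
    rw [Real.dist_eq, sub_zero, abs_div, abs_of_pos hx0, abs_of_pos hxP,
      div_lt_iff₀ hxP] at this
    have h2 : x ^ (P-1) ≤ t ^ (P-1) :=
      Real.rpow_le_rpow hx0.le hx.2 (by linarith)
    calc ‖f x‖ = |f x| := rfl
      _ ≤ ε * x ^ (P-1) := this.le
      _ ≤ ε * t ^ (P-1) := by nlinarith
  have := intervalIntegral.norm_integral_le_of_norm_le_const hbound
  rw [← hF t, sub_zero, abs_of_pos ht] at this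
  calc |F t| = ‖F t‖ := rfl
    _ ≤ ε * t ^ (P-1) * t := this
    _ = ε * t ^ P := by
        rw [mul_assoc, ← Real.rpow_add_one ht.ne' (P-1), sub_add_cancel]

lemma aux_tendsto_div {F Q : ℝ → ℝ}
    (hQ : ∀ t : ℝ, 0 < t → 0 < Q t)
    (h : ∀ ε > (0:ℝ), ∃ δ > (0:ℝ), ∀ t : ℝ, 0 < t → t < δ → |F t| ≤ ε * Q t) :
    Tendsto (fun t : ℝ => F t / Q t) (nhdsWithin 0 (Ioi 0)) (nhds 0) := by
  rw [Metric.tendsto_nhdsWithin_nhds]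
  intro ε hε
  obtain ⟨δ, hδ, hb⟩ := h (ε/2) (by linarith)
  refine ⟨δ, hδ, fun t ht htδ => ?_⟩
  have ht0 : 0 < t := ht
  rw [Real.dist_eq, sub_zero, abs_of_pos ht0] at htδ
  have hQt := hQ t ht0
  rw [Real.dist_eq, sub_zero, abs_div, abs_of_pos hQt, div_lt_iff₀ hQt]
  have := hb t ht0 htδ
  nlinarith

lemma aux_FP_tendsto {P : ℝ} (hP : 2 < P) {f F : ℝ → ℝ} (hf0 : Continuous f)
    (hF : ∀ t : ℝ, F t = ∫ s in (0:ℝ)..t, f s)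
    (hf1 : Tendsto (fun t : ℝ => f t / |t| ^ (P - 1)) (nhdsWithin 0 {0}ᶜ) (nhds 0)) :
    Tendsto (fun t : ℝ => F t / t ^ P) (nhdsWithin 0 (Ioi 0)) (nhds 0) :=
  aux_tendsto_div (fun t ht => Real.rpow_pos_of_pos ht _)
    (fun ε hε => by
      obtain ⟨δ, hδ, _, hb⟩ := aux_Fsmall hP hf0 hF hf1 ε hε
      exact ⟨δ, hδ, hb⟩)

lemma aux_F2_tendsto {P : ℝ} (hP : 2 < P) {f F : ℝ → ℝ} (hf0 : Continuous f)
    (hF : ∀ t : ℝ, F t = ∫ s in (0:ℝ)..t, f s)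
    (hf1 : Tendsto (fun t : ℝ => f t / |t| ^ (P - 1)) (nhdsWithin 0 {0}ᶜ) (nhds 0)) :
    Tendsto (fun t : ℝ => F t / t ^ (2:ℕ)) (nhdsWithin 0 (Ioi 0)) (nhds 0) :=
  aux_tendsto_div (fun t ht => by positivity)
    (fun ε hε => by
      obtain ⟨δ, hδ, hδ1, hb⟩ := aux_Fsmall hP hf0 hF hf1 ε hε
      refine ⟨δ, hδ, fun t ht htδ => (hb t ht htδ).trans ?_⟩
      have h1 : t ^ P ≤ t ^ (2:ℝ) :=
        Real.rpow_le_rpow_of_exponent_ge ht (le_of_lt (lt_of_lt_of_le htδ hδ1)) hP.le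
      rw [Real.rpow_two] at h1
      nlinarith)

lemma aux_fP_tendsto {P : ℝ}
    {f : ℝ → ℝ}
    (hf1 : Tendsto (fun t : ℝ => f t / |t| ^ (P - 1)) (nhdsWithin 0 {0}ᶜ) (nhds 0)) :
    Tendsto (fun t : ℝ => f t / t ^ (P - 1)) (nhdsWithin 0 (Ioi 0)) (nhds 0) := by
  have h := hf1.mono_left (nhdsWithin_mono 0 (fun x (hx : x ∈ Ioi 0) => ne_of_gt hx))
  refine h.congr' ?_
  filter_upwards [self_mem_nhdsWithin] with t (ht : t ∈ Ioi 0)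
  rw [abs_of_pos ht]

lemma aux_FtP_tendsto {P : ℝ} (hP : 2 < P) {f F Ft : ℝ → ℝ} (hf0 : Continuous f)
    (hF : ∀ t : ℝ, F t = ∫ s in (0:ℝ)..t, f s)
    (hFt : ∀ t : ℝ, Ft t = f t * t - 2 * F t)
    (hf1 : Tendsto (fun t : ℝ => f t / |t| ^ (P - 1)) (nhdsWithin 0 {0}ᶜ) (nhds 0)) :
    Tendsto (fun t : ℝ => Ft t / t ^ P) (nhdsWithin 0 (Ioi 0)) (nhds 0) := by
  have h1 := aux_fP_tendsto hf1
  have h2 := aux_FP_tendsto hP hf0 hF hf1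
  have h := h1.sub (h2.const_mul 2)
  norm_num at h
  refine h.congr' ?_
  filter_upwards [self_mem_nhdsWithin] with t (ht : t ∈ Ioi 0)
  have ht0 : (0:ℝ) < t := ht
  have hP0 : (0:ℝ) < t ^ P := Real.rpow_pos_of_pos ht0 _
  rw [hFt t]
  have : t ^ P = t ^ (P-1) * t := by
    rw [← Real.rpow_add_one ht0.ne' (P-1), sub_add_cancel]
  rw [this]
  have hP1 : (0:ℝ) < t ^ (P-1) := Real.rpow_pos_of_pos ht0 _
  field_simp

lemma aux_Ft_pos {P : ℝ} (hP : 2 < P) {f F Ft : ℝ → ℝ} (hf0 : Continuous f)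
    (hF : ∀ t : ℝ, F t = ∫ s in (0:ℝ)..t, f s)
    (hFt : ∀ t : ℝ, Ft t = f t * t - 2 * F t)
    (hf1 : Tendsto (fun t : ℝ => f t / |t| ^ (P - 1)) (nhdsWithin 0 {0}ᶜ) (nhds 0))
    (hf4b : StrictMonoOn (fun t : ℝ => Ft t / |t| ^ P) (Ioi 0)) :
    ∀ t : ℝ, 0 < t → 0 < Ft t := by
  have hg : ∀ s t : ℝ, 0 < s → s < t → Ft s / s ^ P < Ft t / t ^ P := by
    intro s t hs hst
    have := hf4b (a := s) (b := t) hs (lt_trans hs hst) hst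
    simpa [abs_of_pos hs, abs_of_pos (lt_trans hs hst)] using this
  have hge : ∀ r : ℝ, 0 < r → 0 ≤ Ft r / r ^ P := by
    intro r hr
    refine le_of_tendsto (aux_FtP_tendsto hP hf0 hF hFt hf1) ?_
    have h1 : ∀ᶠ s in nhdsWithin (0:ℝ) (Ioi 0), s < r :=
      (eventually_lt_nhds hr).filter_mono nhdsWithin_le_nhds
    filter_upwards [self_mem_nhdsWithin, h1] with s hs hsr
    exact (hg s r hs hsr).le
  intro t ht
  have h2 : (0:ℝ) < t/2 := by linarith
  have := lt_of_le_of_lt (hge (t/2) h2) (hg (t/2) t h2 (by linarith))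
  have hPt : (0:ℝ) < t ^ P := Real.rpow_pos_of_pos ht _
  exact (div_pos_iff.mp this).resolve_right (fun h => absurd hPt (by linarith [h.2])) |>.1

lemma aux_ftc {f F Ft : ℝ → ℝ} (hf0 : Continuous f)
    (hF : ∀ t : ℝ, F t = ∫ s in (0:ℝ)..t, f s)
    (hFt : ∀ t : ℝ, Ft t = f t * t - 2 * F t)
    {a b : ℝ} (ha : 0 < a) (hab : a ≤ b) :
    ∫ r in a..b, Ft r / r ^ (3:ℕ) = F b / b ^ (2:ℕ) - F a / a ^ (2:ℕ) := by
  have hFcont : Continuous F := by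
    have : Differentiable ℝ F := fun x => (aux_deriv hf0 hF x).differentiableAt
    exact this.continuous
  have hFtcont : Continuous Ft := by
    have : Ft = fun t => f t * t - 2 * F t := funext hFt
    rw [this]; exact (hf0.mul continuous_id).sub (continuous_const.mul hFcont)
  have hpos : ∀ x ∈ uIcc a b, (0:ℝ) < x := by
    intro x hx
    rw [uIcc_of_le hab] at hx
    linarith [hx.1]
  refine intervalIntegral.integral_eq_sub_of_hasDerivAt
    (f := fun x => F x / x ^ (2:ℕ)) (f' := fun r => Ft r / r ^ (3:ℕ)) (fun x hx => ?_) ?_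
  · have hx0 := hpos x hx
    have h1 : HasDerivAt (fun y : ℝ => y ^ (2:ℕ)) (2 * x ^ (1:ℕ)) x := by
      simpa using hasDerivAt_pow 2 x
    have h := (aux_deriv hf0 hF x).div h1 (by positivity)
    refine HasDerivAt.congr_deriv h ?_
    rw [hFt x]
    field_simp
  · apply ContinuousOn.intervalIntegrable
    apply ContinuousOn.div hFtcont.continuousOn (by fun_prop)
    intro x hx
    exact pow_ne_zero _ (hpos x hx).ne'

lemma aux_mono_F {P : ℝ} (hP : 2 < P) {f F Ft : ℝ → ℝ} (hf0 : Continuous f)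
    (hF : ∀ t : ℝ, F t = ∫ s in (0:ℝ)..t, f s)
    (hFt : ∀ t : ℝ, Ft t = f t * t - 2 * F t)
    (hf1 : Tendsto (fun t : ℝ => f t / |t| ^ (P - 1)) (nhdsWithin 0 {0}ᶜ) (nhds 0))
    (hf4b : StrictMonoOn (fun t : ℝ => Ft t / |t| ^ P) (Ioi 0)) :
    ∀ s t : ℝ, 0 < s → s < t → F s / s ^ P ≤ F t / t ^ P := by
  intro s t hs hst
  have ht : 0 < t := hs.trans hst
  have hFtcont : Continuous Ft := by
    have hFcont : Continuous F := by
      have : Differentiable ℝ F := fun x => (aux_deriv hf0 hF x).differentiableAt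
      exact this.continuous
    have : Ft = fun t => f t * t - 2 * F t := funext hFt
    rw [this]; exact (hf0.mul continuous_id).sub (continuous_const.mul hFcont)
  have hg : ∀ a b : ℝ, 0 < a → a < b → Ft a / a ^ P < Ft b / b ^ P := by
    intro a b ha hab
    have := hf4b (a := a) (b := b) ha (lt_trans ha hab) hab
    simpa [abs_of_pos ha, abs_of_pos (lt_trans ha hab)] using this
  have key : ∀ c : ℝ, 0 < c → ∀ u : ℝ, 0 < u →
      c ^ ((3:ℝ)-P) * (Ft (c*u) / (c*u)^(3:ℕ)) = (Ft (c*u) / (c*u)^P) * (u^P / u^(3:ℕ)) := by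
    intro c hc u hu
    have h1 : (c*u)^P = c^P * u^P := Real.mul_rpow hc.le hu.le
    have h2 : c ^ ((3:ℝ)-P) = c^(3:ℕ) / c^P := by
      rw [Real.rpow_sub hc, ← Real.rpow_natCast c 3]
      norm_num
    rw [h1, h2]
    have hcP : (0:ℝ) < c^P := Real.rpow_pos_of_pos hc P
    have huP : (0:ℝ) < u^P := Real.rpow_pos_of_pos hu P
    field_simp
  have hfin : ∀ c : ℝ, 0 < c → c^((2:ℝ)-P) * (F c / c^(2:ℕ)) = F c / c^P := by
    intro c hc
    have h2 : c ^ ((2:ℝ)-P) = c^(2:ℕ) / c^P := by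
      rw [Real.rpow_sub hc, ← Real.rpow_natCast c 2]
      norm_num
    have hcP : (0:ℝ) < c^P := Real.rpow_pos_of_pos hc P
    rw [h2]
    field_simp
  -- integral computation
  have hint : ∀ c : ℝ, 0 < c → ∀ a : ℝ, 0 < a → a < 1 →
      ∫ u in a..1, c ^ ((3:ℝ)-P) * (Ft (c*u) / (c*u)^(3:ℕ)) =
        c^((2:ℝ)-P) * (F c / c^(2:ℕ) - F (c*a) / (c*a)^(2:ℕ)) := by
    intro c hc a ha ha1
    rw [intervalIntegral.integral_const_mul]
    rw [intervalIntegral.integral_comp_mul_left (fun r => Ft r / r^(3:ℕ)) hc.ne']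
    rw [mul_one]
    rw [aux_ftc hf0 hF hFt (mul_pos hc ha) (by nlinarith)]
    rw [smul_eq_mul, ← mul_assoc]
    congr 1
    rw [← Real.rpow_neg_one c, ← Real.rpow_add hc]
    congr 1
    ring
  -- pointwise and integral inequality for fixed a
  have main : ∀ a : ℝ, 0 < a → a < 1 →
      s ^ ((2:ℝ)-P) * (F s / s^(2:ℕ) - F (s*a) / (s*a)^(2:ℕ)) ≤
      t ^ ((2:ℝ)-P) * (F t / t^(2:ℕ) - F (t*a) / (t*a)^(2:ℕ)) := by
    intro a ha ha1
    rw [← hint s hs a ha ha1, ← hint t ht a ha ha1]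
    have hic : ∀ c : ℝ, 0 < c →
        IntervalIntegrable (fun u => c ^ ((3:ℝ)-P) * (Ft (c*u) / (c*u)^(3:ℕ))) volume a 1 := by
      intro c hc
      apply ContinuousOn.intervalIntegrable
      apply ContinuousOn.mul continuousOn_const
      apply ContinuousOn.div (hFtcont.comp (continuous_mul_left c)).continuousOn (by fun_prop)
      intro u hu
      rw [uIcc_of_le ha1.le] at hu
      exact pow_ne_zero _ (mul_pos hc (lt_of_lt_of_le ha hu.1)).ne'
    refine intervalIntegral.integral_mono_on ha1.le (hic s hs) (hic t ht) (fun u hu => ?_)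
    have hu0 : 0 < u := lt_of_lt_of_le ha hu.1
    rw [key s hs u hu0, key t ht u hu0]
    have hq : (0:ℝ) < u^P / u^(3:ℕ) := by
      have := Real.rpow_pos_of_pos hu0 P
      positivity
    have := hg (s*u) (t*u) (mul_pos hs hu0) (by nlinarith)
    nlinarith
  -- limits
  have hlim : ∀ c : ℝ, 0 < c →
      Tendsto (fun a : ℝ => c^((2:ℝ)-P) * (F c / c^(2:ℕ) - F (c*a)/(c*a)^(2:ℕ)))
        (nhdsWithin 0 (Ioi 0)) (nhds (c^((2:ℝ)-P) * (F c / c^(2:ℕ) - 0))) := by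
    intro c hc
    refine Tendsto.const_mul _ (Tendsto.const_sub _ ?_)
    have hmap : Tendsto (fun a : ℝ => c*a) (nhdsWithin (0:ℝ) (Ioi 0)) (nhdsWithin (0:ℝ) (Ioi 0)) := by
      apply tendsto_nhdsWithin_of_tendsto_nhds_of_eventually_within
      · have := ((continuous_mul_left c).tendsto 0).mono_left
          (nhdsWithin_le_nhds (s := Ioi (0:ℝ)))
        simpa using this
      · filter_upwards [self_mem_nhdsWithin] with x (hx : x ∈ Ioi 0)
        exact mul_pos hc hx
    exact (aux_F2_tendsto hP hf0 hF hf1).comp hmap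
  have hev : ∀ᶠ a in nhdsWithin (0:ℝ) (Ioi 0),
      s ^ ((2:ℝ)-P) * (F s / s^(2:ℕ) - F (s*a) / (s*a)^(2:ℕ)) ≤
      t ^ ((2:ℝ)-P) * (F t / t^(2:ℕ) - F (t*a) / (t*a)^(2:ℕ)) := by
    have h1 : ∀ᶠ a in nhdsWithin (0:ℝ) (Ioi 0), a < 1 :=
      (eventually_lt_nhds one_pos).filter_mono nhdsWithin_le_nhds
    filter_upwards [self_mem_nhdsWithin, h1] with a (ha : a ∈ Ioi 0) ha1
    exact main a ha ha1
  have := le_of_tendsto_of_tendsto (hlim s hs) (hlim t ht) hev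
  rw [sub_zero, sub_zero, hfin s hs, hfin t ht] at this
  exact this

theorem stmt_8 (N : ℕ) (hN : 3 ≤ N) (p : ℝ) (hp2 : 2 ≤ p) (hpN : p < (N : ℝ))
    (f F Ft : ℝ → ℝ) (hf0 : Continuous f)
    (hF : ∀ t : ℝ, F t = ∫ s in (0:ℝ)..t, f s)
    (hFt : ∀ t : ℝ, Ft t = f t * t - 2 * F t)
    (hf1 : Tendsto (fun t : ℝ => f t / |t| ^ (p + 2 * p / (N : ℝ) - 1)) (nhdsWithin 0 {0}ᶜ) (nhds 0))
    (hf2 : Tendsto (fun t : ℝ => f t / |t| ^ ((N : ℝ) * p / ((N : ℝ) - p) - 1)) (cocompact ℝ) (nhds 0))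
    (hf3 : Tendsto (fun t : ℝ => F t / |t| ^ (p + 2 * p / (N : ℝ))) (cocompact ℝ) atTop)
    (hf4a : StrictAntiOn (fun t : ℝ => Ft t / |t| ^ (p + 2 * p / (N : ℝ))) (Iio 0))
    (hf4b : StrictMonoOn (fun t : ℝ => Ft t / |t| ^ (p + 2 * p / (N : ℝ))) (Ioi 0)) :
    StrictMonoOn (fun t : ℝ => f t / t ^ ((p + 2 * p / (N : ℝ)) - 1)) (Ioi 0) := by
  have hN0 : (0:ℝ) < N := by
    have : (3:ℝ) ≤ N := by exact_mod_cast hN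
    linarith
  have hP : 2 < p + 2 * p / (N : ℝ) := by
    have : 0 < 2 * p / (N : ℝ) := by positivity
    linarith
  have hdec : ∀ c : ℝ, 0 < c →
      f c / c ^ ((p + 2 * p / (N : ℝ)) - 1) =
        Ft c / c ^ (p + 2 * p / (N : ℝ)) + 2 * (F c / c ^ (p + 2 * p / (N : ℝ))) := by
    intro c hc
    have hc1 : c ^ (p + 2 * p / (N : ℝ)) = c ^ ((p + 2 * p / (N : ℝ)) - 1) * c := by
      rw [← Real.rpow_add_one hc.ne' _, sub_add_cancel]
    have h1 : (0:ℝ) < c ^ ((p + 2 * p / (N : ℝ)) - 1) := Real.rpow_pos_of_pos hc _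
    rw [hFt c, hc1]
    field_simp
    ring
  intro a ha b hb hab
  have ha0 : (0:ℝ) < a := ha
  have hb0 : (0:ℝ) < b := hb
  simp only []
  rw [hdec a ha0, hdec b hb0]
  have h1 : Ft a / a ^ (p + 2 * p / (N : ℝ)) < Ft b / b ^ (p + 2 * p / (N : ℝ)) := by
    have := hf4b ha hb hab
    simpa [abs_of_pos ha0, abs_of_pos hb0] using this
  have h2 := aux_mono_F hP hf0 hF hFt hf1 hf4b a b ha0 hab
  linarith
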